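/- Fix reals L < U and t > 0, and set μ = U − L + 2t. Let r_1, …, r_s be i.i.d. random variables uniformly distributed on [L − t, U + t]. For x, y ∈ [L, U] with |x − y| ≤ 2t, let d_H = d_H(BV(x), BV(y)) be the Hamming distance between the BV encodings of x and y. Then E[μ · d_H / (2s)] = |x − y|; that is, the estimator μ · d_H / (2s) of the Euclidean distance is unbiased within the local view. -/

import Mathlib

open MeasureTheory ProbabilityTheory

/-- The BV hash: `h_{r,t}(x) = 1` if `x ∈ [r - t, r + t]` and `0` otherwise. -/
noncomputable def bvHash (t r x : ℝ) : ℕ := if x ∈ Set.Icc (r - t) (r + t) then 1 else 0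

/-- The uniform probability measure on the interval `[a, b]`. -/
noncomputable def uniformIcc (a b : ℝ) : Measure ℝ :=
  (ENNReal.ofReal (b - a))⁻¹ • (volume.restrict (Set.Icc a b))

/-- The (random) Hamming distance between the BV encodings of `x` and `y`:
the number of coordinates in which they differ. -/
noncomputable def bvHammingDist (t : ℝ) {s : ℕ} {Ω : Type*} (r : Fin s → Ω → ℝ)
    (x y : ℝ) (ω : Ω) : ℕ :=
  (Finset.univ.filter fun i => bvHash t (r i ω) x ≠ bvHash t (r i ω) y).card
/-- For `L < U`, `t > 0`, `μ = U - L + 2t`, `r 0, …, r (s-1)` i.i.d. uniform on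
`[L - t, U + t]`, and `x, y ∈ [L, U]` with `|x - y| ≤ 2t`, the estimator `μ · d_H / (2s)` of the
Euclidean distance is unbiased: `E[μ · d_H / (2s)] = |x - y|`. -/
theorem bv_distance_estimator_unbiased
    {Ω : Type*} [MeasurableSpace Ω] (P : Measure Ω) [IsProbabilityMeasure P]
    (L U t μ : ℝ) (hLU : L < U) (ht : 0 < t) (hμ : μ = U - L + 2 * t)
    (s : ℕ) (hs : 1 ≤ s) (r : Fin s → Ω → ℝ) (hr : ∀ i, Measurable (r i))
    (hlaw : ∀ i, Measure.map (r i) P = uniformIcc (L - t) (U + t))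
    (hindep : iIndepFun r P)
    (x y : ℝ) (hx : x ∈ Set.Icc L U) (hy : y ∈ Set.Icc L U)
    (hxy : |x - y| ≤ 2 * t) :
    ∫ ω, μ * (bvHammingDist t r x y ω : ℝ) / (2 * s) ∂P = |x - y| := by
  classical
  -- reduce to the case x ≤ y
  wlog hle : x ≤ y generalizing x y with H
  · have hd : ∀ ω, bvHammingDist t r x y ω = bvHammingDist t r y x ω := by
      intro ω
      unfold bvHammingDist
      congr 1
      apply Finset.filter_congr
      intro i _
      simp [ne_comm]
    have := H y x hy hx (by rwa [abs_sub_comm]) (le_of_lt (not_le.mp hle))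
    rw [abs_sub_comm]
    simp_rw [hd]
    exact this
  obtain ⟨hxL, hxU⟩ := hx
  obtain ⟨hyL, hyU⟩ := hy
  have hyx : y - x ≤ 2 * t := by
    have := abs_sub_comm x y ▸ hxy
    rw [abs_of_nonneg (by linarith)] at this
    linarith
  have hμpos : 0 < μ := by rw [hμ]; linarith
  -- the set where the two hashes differ
  set D : Set ℝ := Set.Ico (x - t) (y - t) ∪ Set.Ioc (x + t) (y + t) with hDdef
  have hD : MeasurableSet D := (measurableSet_Ico.union measurableSet_Ioc)
  have hmemD : ∀ z : ℝ, (bvHash t z x ≠ bvHash t z y) ↔ z ∈ D := by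
    intro z
    have hx' : x ∈ Set.Icc (z - t) (z + t) ↔ (x - t ≤ z ∧ z ≤ x + t) := by
      simp only [Set.mem_Icc]; constructor <;> rintro ⟨a, b⟩ <;> exact ⟨by linarith, by linarith⟩
    have hy' : y ∈ Set.Icc (z - t) (z + t) ↔ (y - t ≤ z ∧ z ≤ y + t) := by
      simp only [Set.mem_Icc]; constructor <;> rintro ⟨a, b⟩ <;> exact ⟨by linarith, by linarith⟩
    have hiff : (bvHash t z x ≠ bvHash t z y) ↔
        ¬ ((x - t ≤ z ∧ z ≤ x + t) ↔ (y - t ≤ z ∧ z ≤ y + t)) := by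
      simp only [bvHash, hx', hy']
      by_cases h1 : (x - t ≤ z ∧ z ≤ x + t) <;> by_cases h2 : (y - t ≤ z ∧ z ≤ y + t)
      · rw [if_pos h1, if_pos h2]
        exact iff_of_false (fun h => h rfl) (not_not_intro (iff_of_true h1 h2))
      · rw [if_pos h1, if_neg h2]
        exact iff_of_true one_ne_zero (fun h => h2 (h.mp h1))
      · rw [if_neg h1, if_pos h2]
        exact iff_of_true zero_ne_one (fun h => h1 (h.mpr h2))
      · rw [if_neg h1, if_neg h2]
        exact iff_of_false (fun h => h rfl) (not_not_intro (iff_of_false h1 h2))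
    rw [hiff, hDdef]
    simp only [Set.mem_union, Set.mem_Ico, Set.mem_Ioc]
    constructor
    · intro h
      by_cases hP : x - t ≤ z ∧ z ≤ x + t
      · have hQ : ¬ (y - t ≤ z ∧ z ≤ y + t) := fun hQ => h (iff_of_true hP hQ)
        push_neg at hQ
        have hz : z < y - t := by
          by_contra hc
          push_neg at hc
          have := hQ hc
          linarith [hP.2]
        exact Or.inl ⟨hP.1, hz⟩
      · have hQ : y - t ≤ z ∧ z ≤ y + t := by
          by_contra hQ
          exact h (iff_of_false hP hQ)
        push_neg at hP
        have hz : x + t < z := by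
          by_contra hc
          push_neg at hc
          have := hP (by linarith [hQ.1])
          linarith
        exact Or.inr ⟨hz, hQ.2⟩
    · rintro (⟨c1, c2⟩ | ⟨c1, c2⟩) hiff'
      · have := (hiff'.mp ⟨c1, by linarith⟩).1
        linarith
      · have := (hiff'.mpr ⟨by linarith, c2⟩).2
        linarith
  have hsub : D ⊆ Set.Icc (L - t) (U + t) := by
    rintro z (⟨hz1, hz2⟩ | ⟨hz1, hz2⟩) <;> constructor <;> linarith
  have hvol : volume D = ENNReal.ofReal (2 * (y - x)) := by
    have hdisj : Disjoint (Set.Ico (x - t) (y - t)) (Set.Ioc (x + t) (y + t)) := by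
      rw [Set.disjoint_left]
      rintro z ⟨hz1, hz2⟩ ⟨hz3, hz4⟩
      linarith
    rw [hDdef, measure_union hdisj measurableSet_Ioc, Real.volume_Ico, Real.volume_Ioc,
      ← ENNReal.ofReal_add (by linarith) (by linarith)]
    ring_nf
  -- per-coordinate expectation
  have hint : ∀ i : Fin s,
      Integrable (fun ω => if bvHash t (r i ω) x ≠ bvHash t (r i ω) y then (1 : ℝ) else 0) P := by
    intro i
    have heq : (fun ω => if bvHash t (r i ω) x ≠ bvHash t (r i ω) y then (1 : ℝ) else 0)
        = Set.indicator (r i ⁻¹' D) (fun _ => (1 : ℝ)) := by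
      funext ω
      rw [Set.indicator_apply]
      by_cases h : r i ω ∈ D
      · rw [if_pos ((hmemD _).mpr h)]
        simp [Set.mem_preimage, h]
      · rw [if_neg (fun hc => h ((hmemD _).mp hc))]
        simp [Set.mem_preimage, h]
    rw [heq]
    exact (integrable_const (1 : ℝ)).indicator ((hr i) hD)
  have key : ∀ i : Fin s,
      ∫ ω, (if bvHash t (r i ω) x ≠ bvHash t (r i ω) y then (1 : ℝ) else 0) ∂P
        = 2 * (y - x) / μ := by
    intro i
    have heq : (fun ω => if bvHash t (r i ω) x ≠ bvHash t (r i ω) y then (1 : ℝ) else 0)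
        = Set.indicator (r i ⁻¹' D) (fun _ => (1 : ℝ)) := by
      funext ω
      rw [Set.indicator_apply]
      by_cases h : r i ω ∈ D
      · rw [if_pos ((hmemD _).mpr h)]
        simp [Set.mem_preimage, h]
      · rw [if_neg (fun hc => h ((hmemD _).mp hc))]
        simp [Set.mem_preimage, h]
    rw [heq]
    have : ∫ ω, Set.indicator (r i ⁻¹' D) (fun _ => (1 : ℝ)) ω ∂P
        = (P (r i ⁻¹' D)).toReal := by
      rw [integral_indicator ((hr i) hD)]
      simp
      rfl
    rw [this]
    have hmap : P (r i ⁻¹' D) = Measure.map (r i) P D := (Measure.map_apply (hr i) hD).symm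
    rw [hmap, hlaw i]
    have hμeq : U + t - (L - t) = μ := by rw [hμ]; ring
    rw [uniformIcc, Measure.smul_apply, Measure.restrict_apply hD,
      Set.inter_eq_self_of_subset_left hsub, hvol, hμeq, smul_eq_mul,
      ENNReal.toReal_mul, ENNReal.toReal_inv, ENNReal.toReal_ofReal hμpos.le,
      ENNReal.toReal_ofReal (by linarith)]
    rw [inv_mul_eq_div]
  -- express the Hamming distance as a sum
  have hsum : ∀ ω, (bvHammingDist t r x y ω : ℝ)
      = ∑ i : Fin s, (if bvHash t (r i ω) x ≠ bvHash t (r i ω) y then (1 : ℝ) else 0) := by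
    intro ω
    unfold bvHammingDist
    rw [Finset.card_filter]
    push_cast
    rfl
  have hrw : ∀ ω, μ * (bvHammingDist t r x y ω : ℝ) / (2 * s)
      = (μ / (2 * s)) * ∑ i : Fin s, (if bvHash t (r i ω) x ≠ bvHash t (r i ω) y then (1 : ℝ) else 0) := by
    intro ω
    rw [← hsum ω]
    ring
  simp_rw [hrw]
  rw [integral_const_mul, integral_finset_sum Finset.univ (fun i _ => hint i)]
  simp_rw [key]
  rw [Finset.sum_const, Finset.card_univ, Fintype.card_fin, nsmul_eq_mul]
  have hs0 : (s : ℝ) ≠ 0 := Nat.cast_ne_zero.mpr (by omega)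
  rw [abs_sub_comm, abs_of_nonneg (by linarith)]
  field_simp
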